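/- For every integer n ≥ 8, 4·(C(n−4,4) + 6·⌊(n−4)/2⌋·⌊(n−5)/2⌋ + 2(n−4) − 3) ≥ ⌊n/2⌋·⌊(n−1)/2⌋·⌊(n−2)/2⌋·⌊(n−3)/2⌋, with equality if and only if 8 ≤ n ≤ 11. (The left side is four times the number of crossings of the drawing of K_n obtained from a crossing-minimal tripartite-circle drawing of K_{2,2,n−4} by adding straight-line edges inside the circles; the right side is 4·H(n), where H(n) is the Harary–Hill bound.) -/
import Mathlib

lemma ch24 (a : ℕ) : 24 * (((a + 4).choose 4 : ℕ) : ℤ) =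
    ((a : ℤ) + 4) * ((a : ℤ) + 3) * ((a : ℤ) + 2) * ((a : ℤ) + 1) := by
  have h := Nat.descFactorial_eq_factorial_mul_choose (a + 4) 4
  simp [Nat.descFactorial_succ, Nat.factorial] at h
  have := congrArg (fun x : ℕ => (x : ℤ)) h
  push_cast at this
  linarith [this]

theorem stmt_16 (n : ℕ) (hn : 8 ≤ n) :
    (((n / 2 * ((n - 1) / 2) * ((n - 2) / 2) * ((n - 3) / 2) : ℕ)) : ℤ) ≤
      4 * (((n - 4).choose 4 : ℤ)
        + 6 * (((n - 4) / 2 : ℕ) : ℤ) * (((n - 5) / 2 : ℕ) : ℤ)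
        + 2 * ((n : ℤ) - 4) - 3) ∧
    (4 * (((n - 4).choose 4 : ℤ)
        + 6 * (((n - 4) / 2 : ℕ) : ℤ) * (((n - 5) / 2 : ℕ) : ℤ)
        + 2 * ((n : ℤ) - 4) - 3) =
      (((n / 2 * ((n - 1) / 2) * ((n - 2) / 2) * ((n - 3) / 2) : ℕ)) : ℤ) ↔ n ≤ 11) := by
  by_cases h11 : n ≤ 11
  · refine ⟨?_, by simp [h11]; interval_cases n <;> decide⟩
    interval_cases n <;> decide
  · push_neg at h11
    have key : (((n / 2 * ((n - 1) / 2) * ((n - 2) / 2) * ((n - 3) / 2) : ℕ)) : ℤ) <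
        4 * (((n - 4).choose 4 : ℤ)
          + 6 * (((n - 4) / 2 : ℕ) : ℤ) * (((n - 5) / 2 : ℕ) : ℤ)
          + 2 * ((n : ℤ) - 4) - 3) := by
      rcases Nat.even_or_odd n with ⟨k, hk⟩ | ⟨k, hk⟩
      · -- n = 2k, k ≥ 6; set j = k - 6, n = 2j + 12
        obtain ⟨j, hj⟩ : ∃ j, n = 2 * j + 12 := ⟨k - 6, by omega⟩
        have e1 : n / 2 = j + 6 := by omega
        have e2 : (n - 1) / 2 = j + 5 := by omega
        have e3 : (n - 2) / 2 = j + 5 := by omega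
        have e4 : (n - 3) / 2 = j + 4 := by omega
        have e5 : (n - 4) / 2 = j + 4 := by omega
        have e6 : (n - 5) / 2 = j + 3 := by omega
        have e7 : n - 4 = (2 * j + 4) + 4 := by omega
        rw [e1, e2, e3, e4, e5, e6, e7]
        have hc := ch24 (2 * j + 4)
        push_cast [hj] at hc ⊢
        nlinarith [hc, sq_nonneg (j : ℤ), Int.natCast_nonneg j,
          mul_nonneg (Int.natCast_nonneg j) (Int.natCast_nonneg j)]
      · obtain ⟨j, hj⟩ : ∃ j, n = 2 * j + 13 := ⟨k - 6, by omega⟩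
        have e1 : n / 2 = j + 6 := by omega
        have e2 : (n - 1) / 2 = j + 6 := by omega
        have e3 : (n - 2) / 2 = j + 5 := by omega
        have e4 : (n - 3) / 2 = j + 5 := by omega
        have e5 : (n - 4) / 2 = j + 4 := by omega
        have e6 : (n - 5) / 2 = j + 4 := by omega
        have e7 : n - 4 = (2 * j + 5) + 4 := by omega
        rw [e1, e2, e3, e4, e5, e6, e7]
        have hc := ch24 (2 * j + 5)
        push_cast [hj] at hc ⊢
        nlinarith [hc, sq_nonneg (j : ℤ), Int.natCast_nonneg j,
          mul_nonneg (Int.natCast_nonneg j) (Int.natCast_nonneg j)]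
    exact ⟨le_of_lt key, by constructor <;> intro h <;> omega⟩
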